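/- Key inequality for the dual error bound: for any y ∈ ℝⁿ and any dual optimal y* ∈ Y*, with (x¹(y), x²(y)) minimizing the augmented Lagrangian at y and (x¹(y*), x²(y*)) at y*, one has ‖Mx²(y) - Mx²(y*)‖₂² + ρ‖E x(y) - E x(y*)‖₂² ≤ ‖y - y*‖₂ · ‖∇g_ρ(y)‖₂, where E = [I, -I] so that Ex = x¹ - x². -/

import Mathlib

open scoped InnerProductSpace

lemma quad_id {F : Type*} [NormedAddCommGroup F] [InnerProductSpace ℝ F] (p q : F) (t : ℝ) :
    ‖p + t • (q - p)‖ ^ 2 = (1 - t) * ‖p‖ ^ 2 + t * ‖q‖ ^ 2 - t * (1 - t) * ‖q - p‖ ^ 2 := by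
  have h1 : ‖p + t • (q - p)‖ ^ 2
      = ‖p‖ ^ 2 + 2 * (t * ⟪p, q - p⟫_ℝ) + t ^ 2 * ‖q - p‖ ^ 2 := by
    rw [norm_add_sq_real, real_inner_smul_right, norm_smul, Real.norm_eq_abs, mul_pow, sq_abs]
  have h2 : ‖q‖ ^ 2 = ‖p‖ ^ 2 + 2 * ⟪p, q - p⟫_ℝ + ‖q - p‖ ^ 2 := by
    have h := norm_add_sq_real p (q - p)
    simpa using h
  linear_combination h1 - t * h2

lemma aux_limit (c A : ℝ) (h : ∀ t : ℝ, 0 < t → t ≤ 1 → (1 - t) * c ≤ A) : c ≤ A := by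
  by_contra hc
  push_neg at hc
  rcases le_or_gt c 0 with h0 | h0
  · have := h 1 one_pos le_rfl
    simp at this
    linarith
  · set t := min 1 ((c - A) / (2 * c)) with ht
    have ht0 : 0 < t := lt_min one_pos (div_pos (by linarith) (by linarith))
    have ht1 : t ≤ 1 := min_le_left _ _
    have h2 := h t ht0 ht1
    have h3 : t ≤ (c - A) / (2 * c) := min_le_right _ _
    have h4 : t * c ≤ (c - A) / 2 := by
      have := mul_le_mul_of_nonneg_right h3 (le_of_lt h0)
      calc t * c ≤ ((c - A) / (2 * c)) * c := this
        _ = (c - A) / 2 := by field_simp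
    nlinarith

def projF (n : ℕ) (s : Finset (Fin n)) (v : EuclideanSpace ℝ (Fin n)) :
    EuclideanSpace ℝ (Fin n) := WithLp.toLp 2 (fun i => if i ∈ s then v i else 0)

lemma norm_projF (n : ℕ) (s : Finset (Fin n)) (v : EuclideanSpace ℝ (Fin n)) :
    ‖projF n s v‖ = Real.sqrt (∑ i ∈ s, v i ^ 2) := by
  rw [EuclideanSpace.norm_eq]
  congr 1
  have : ∀ i, ‖projF n s v i‖ ^ 2 = if i ∈ s then v i ^ 2 else 0 := by
    intro i
    simp only [projF, PiLp.toLp_apply, Real.norm_eq_abs]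
    split <;> simp [sq_abs]
  rw [Finset.sum_congr rfl fun i _ => this i, Finset.sum_ite_mem, Finset.univ_inter]

lemma group_convex (n : ℕ) (s : Finset (Fin n)) (a u : EuclideanSpace ℝ (Fin n)) (t : ℝ)
    (ht0 : 0 ≤ t) (ht1 : t ≤ 1) :
    Real.sqrt (∑ i ∈ s, (a + t • (u - a)) i ^ 2) ≤
      (1 - t) * Real.sqrt (∑ i ∈ s, a i ^ 2) + t * Real.sqrt (∑ i ∈ s, u i ^ 2) := by
  rw [← norm_projF, ← norm_projF, ← norm_projF]
  have hsplit : projF n s (a + t • (u - a)) = (1 - t) • projF n s a + t • projF n s u := by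
    ext i
    simp only [projF, PiLp.toLp_apply, PiLp.add_apply, PiLp.smul_apply, PiLp.sub_apply, smul_eq_mul]
    split <;> ring
  rw [hsplit]
  calc ‖(1 - t) • projF n s a + t • projF n s u‖
      ≤ ‖(1 - t) • projF n s a‖ + ‖t • projF n s u‖ := norm_add_le _ _
    _ = (1 - t) * ‖projF n s a‖ + t * ‖projF n s u‖ := by
        rw [norm_smul, norm_smul, Real.norm_eq_abs, Real.norm_eq_abs,
          abs_of_nonneg (by linarith), abs_of_nonneg ht0]

lemma combine_step (t ψa ψu ψv qa qu qv ia iu iv ra ru rv Dm Dr ρ : ℝ)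
    (ht0 : 0 < t)
    (hψ : ψv ≤ (1 - t) * ψa + t * ψu)
    (hq : qv = (1 - t) * qa + t * qu - t * (1 - t) * Dm)
    (hr : rv = (1 - t) * ra + t * ru - t * (1 - t) * Dr)
    (hi : iv = (1 - t) * ia + t * iu)
    (hm : ψa + (1 / 2) * qa + ia + (ρ / 2) * ra ≤ ψv + (1 / 2) * qv + iv + (ρ / 2) * rv) :
    (1 - t) * ((Dm + ρ * Dr) / 2) ≤
      (ψu + (1 / 2) * qu + iu + (ρ / 2) * ru) - (ψa + (1 / 2) * qa + ia + (ρ / 2) * ra) := by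
  have hr' : (ρ / 2) * rv = (ρ / 2) * ((1 - t) * ra + t * ru - t * (1 - t) * Dr) := by rw [hr]
  have key : t * ((1 - t) * ((Dm + ρ * Dr) / 2)) ≤
      t * ((ψu + (1 / 2) * qu + iu + (ρ / 2) * ru) -
        (ψa + (1 / 2) * qa + ia + (ρ / 2) * ra)) := by linarith
  exact le_of_mul_le_mul_left key ht0

lemma strong_min (n d : ℕ) (G : Type) [Fintype G] (lam ρ : ℝ) (hlam : 0 ≤ lam) (hρ : 0 ≤ ρ)
    (w : G → ℝ) (hw : ∀ g, 0 ≤ w g) (j : G → Finset (Fin n))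
    (M : Matrix (Fin d) (Fin n) ℝ) (b : EuclideanSpace ℝ (Fin d))
    (y a1 a2 u1 u2 : EuclideanSpace ℝ (Fin n))
    (hmin : ∀ v1 v2 : EuclideanSpace ℝ (Fin n),
      lam * ∑ g, w g * Real.sqrt (∑ t ∈ j g, a1 t ^ 2) +
        (1 / 2) * ‖Matrix.toEuclideanLin M a2 - b‖ ^ 2 + ⟪y, a1 - a2⟫_ℝ +
        (ρ / 2) * ‖a1 - a2‖ ^ 2 ≤
      lam * ∑ g, w g * Real.sqrt (∑ t ∈ j g, v1 t ^ 2) +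
        (1 / 2) * ‖Matrix.toEuclideanLin M v2 - b‖ ^ 2 + ⟪y, v1 - v2⟫_ℝ +
        (ρ / 2) * ‖v1 - v2‖ ^ 2) :
    lam * ∑ g, w g * Real.sqrt (∑ t ∈ j g, a1 t ^ 2) +
        (1 / 2) * ‖Matrix.toEuclideanLin M a2 - b‖ ^ 2 + ⟪y, a1 - a2⟫_ℝ +
        (ρ / 2) * ‖a1 - a2‖ ^ 2 +
      (1 / 2) * (‖Matrix.toEuclideanLin M u2 - Matrix.toEuclideanLin M a2‖ ^ 2 +
        ρ * ‖(u1 - u2) - (a1 - a2)‖ ^ 2) ≤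
    lam * ∑ g, w g * Real.sqrt (∑ t ∈ j g, u1 t ^ 2) +
        (1 / 2) * ‖Matrix.toEuclideanLin M u2 - b‖ ^ 2 + ⟪y, u1 - u2⟫_ℝ +
        (ρ / 2) * ‖u1 - u2‖ ^ 2 := by
  have hstep : ∀ t : ℝ, 0 < t → t ≤ 1 →
      (1 - t) * ((‖Matrix.toEuclideanLin M u2 - Matrix.toEuclideanLin M a2‖ ^ 2 +
          ρ * ‖(u1 - u2) - (a1 - a2)‖ ^ 2) / 2) ≤
        (lam * ∑ g, w g * Real.sqrt (∑ t ∈ j g, u1 t ^ 2) +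
          (1 / 2) * ‖Matrix.toEuclideanLin M u2 - b‖ ^ 2 + ⟪y, u1 - u2⟫_ℝ +
          (ρ / 2) * ‖u1 - u2‖ ^ 2) -
        (lam * ∑ g, w g * Real.sqrt (∑ t ∈ j g, a1 t ^ 2) +
          (1 / 2) * ‖Matrix.toEuclideanLin M a2 - b‖ ^ 2 + ⟪y, a1 - a2⟫_ℝ +
          (ρ / 2) * ‖a1 - a2‖ ^ 2) := by
    intro t ht0 ht1
    set v1 := a1 + t • (u1 - a1) with hv1
    set v2 := a2 + t • (u2 - a2) with hv2
    have hMv : Matrix.toEuclideanLin M v2 - b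
        = (Matrix.toEuclideanLin M a2 - b) +
          t • ((Matrix.toEuclideanLin M u2 - b) - (Matrix.toEuclideanLin M a2 - b)) := by
      rw [hv2, map_add, map_smul, map_sub]
      simp [smul_sub]
      abel
    have hq : ‖Matrix.toEuclideanLin M v2 - b‖ ^ 2
        = (1 - t) * ‖Matrix.toEuclideanLin M a2 - b‖ ^ 2
          + t * ‖Matrix.toEuclideanLin M u2 - b‖ ^ 2
          - t * (1 - t) * ‖Matrix.toEuclideanLin M u2 - Matrix.toEuclideanLin M a2‖ ^ 2 := by
      rw [hMv, quad_id,
        show (Matrix.toEuclideanLin M u2 - b) - (Matrix.toEuclideanLin M a2 - b)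
          = Matrix.toEuclideanLin M u2 - Matrix.toEuclideanLin M a2 from by abel]
    have hE : v1 - v2 = (a1 - a2) + t • ((u1 - u2) - (a1 - a2)) := by
      rw [hv1, hv2]
      simp [smul_sub]
      abel
    have hr : ‖v1 - v2‖ ^ 2 = (1 - t) * ‖a1 - a2‖ ^ 2 + t * ‖u1 - u2‖ ^ 2
        - t * (1 - t) * ‖(u1 - u2) - (a1 - a2)‖ ^ 2 := by
      rw [hE, quad_id]
    have hin : ⟪y, v1 - v2⟫_ℝ = (1 - t) * ⟪y, a1 - a2⟫_ℝ + t * ⟪y, u1 - u2⟫_ℝ := by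
      rw [hE]
      simp only [inner_add_right, inner_sub_right, real_inner_smul_right]
      ring
    have hpsi : lam * ∑ g, w g * Real.sqrt (∑ i ∈ j g, v1 i ^ 2)
        ≤ (1 - t) * (lam * ∑ g, w g * Real.sqrt (∑ i ∈ j g, a1 i ^ 2))
          + t * (lam * ∑ g, w g * Real.sqrt (∑ i ∈ j g, u1 i ^ 2)) := by
      have hg : ∀ g ∈ (Finset.univ : Finset G), w g * Real.sqrt (∑ i ∈ j g, v1 i ^ 2)
          ≤ w g * ((1 - t) * Real.sqrt (∑ i ∈ j g, a1 i ^ 2)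
            + t * Real.sqrt (∑ i ∈ j g, u1 i ^ 2)) := fun g _ =>
        mul_le_mul_of_nonneg_left (group_convex n (j g) a1 u1 t (le_of_lt ht0) ht1) (hw g)
      calc lam * ∑ g, w g * Real.sqrt (∑ i ∈ j g, v1 i ^ 2)
          ≤ lam * ∑ g, w g * ((1 - t) * Real.sqrt (∑ i ∈ j g, a1 i ^ 2)
            + t * Real.sqrt (∑ i ∈ j g, u1 i ^ 2)) :=
            mul_le_mul_of_nonneg_left (Finset.sum_le_sum hg) hlam
        _ = (1 - t) * (lam * ∑ g, w g * Real.sqrt (∑ i ∈ j g, a1 i ^ 2))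
            + t * (lam * ∑ g, w g * Real.sqrt (∑ i ∈ j g, u1 i ^ 2)) := by
            rw [Finset.mul_sum, Finset.mul_sum, Finset.mul_sum, Finset.mul_sum,
              Finset.mul_sum, ← Finset.sum_add_distrib]
            exact Finset.sum_congr rfl fun g _ => by ring
    exact combine_step t _ _ _ _ _ _ _ _ _ _ _ _ _ _ _ ht0 hpsi hq hr hin (hmin v1 v2)
  have := aux_limit _ _ hstep
  linarith

/-- Key inequality for the dual error bound. For any `y` and any dual
optimal `y*`, with `(x¹(y), x²(y))` minimizing the augmented Lagrangian at `y`
and `(x¹(y*), x²(y*))` at `y*` (where `x¹(y*) = x²(y*)`),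
`‖Mx²(y) - Mx²(y*)‖² + ρ‖Ex(y) - Ex(y*)‖² ≤ ‖y - y*‖ ‖∇g_ρ(y)‖`,
with `Ex = x¹ - x²` and `∇g_ρ(y) = x¹(y) - x²(y)`. -/
theorem dual_error_bound_key_inequality
    (n d : ℕ) (G : Type) [Fintype G] (lam ρ : ℝ) (hlam : 0 < lam) (hρ : 0 < ρ)
    (w : G → ℝ) (hw : ∀ g, 0 < w g) (j : G → Finset (Fin n))
    (hdisj : ∀ g g', g ≠ g' → Disjoint (j g) (j g'))
    (M : Matrix (Fin d) (Fin n) ℝ) (b : EuclideanSpace ℝ (Fin d))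
    (x1 x2 : EuclideanSpace ℝ (Fin n) → EuclideanSpace ℝ (Fin n)) :
    let L : EuclideanSpace ℝ (Fin n) → EuclideanSpace ℝ (Fin n) →
        EuclideanSpace ℝ (Fin n) → ℝ := fun u1 u2 y =>
      lam * ∑ g, w g * Real.sqrt (∑ t ∈ j g, u1 t ^ 2) +
        (1 / 2) * ‖Matrix.toEuclideanLin M u2 - b‖ ^ 2 + ⟪y, u1 - u2⟫_ℝ +
        (ρ / 2) * ‖u1 - u2‖ ^ 2
    let gdual : EuclideanSpace ℝ (Fin n) → ℝ := fun y => L (x1 y) (x2 y) y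
    (∀ y u1 u2, L (x1 y) (x2 y) y ≤ L u1 u2 y) →
      ∀ y ystar, (∀ y', gdual y' ≤ gdual ystar) → x1 ystar = x2 ystar →
        ‖Matrix.toEuclideanLin M (x2 y) - Matrix.toEuclideanLin M (x2 ystar)‖ ^ 2 +
            ρ * ‖(x1 y - x2 y) - (x1 ystar - x2 ystar)‖ ^ 2 ≤
          ‖y - ystar‖ * ‖x1 y - x2 y‖ := by
  intro L gdual hmin y ystar hstar hxy
  have h1 := strong_min n d G lam ρ (le_of_lt hlam) (le_of_lt hρ) w (fun g => le_of_lt (hw g))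
    j M b y (x1 y) (x2 y) (x1 ystar) (x2 ystar) (hmin y)
  have h2 := strong_min n d G lam ρ (le_of_lt hlam) (le_of_lt hρ) w (fun g => le_of_lt (hw g))
    j M b ystar (x1 ystar) (x2 ystar) (x1 y) (x2 y) (hmin ystar)
  rw [hxy] at h1 h2 ⊢
  have hz : x2 ystar - x2 ystar = (0 : EuclideanSpace ℝ (Fin n)) := sub_self _
  rw [hz] at h1 h2 ⊢
  simp only [inner_zero_right, norm_zero, zero_sub, sub_zero, norm_neg] at h1 h2 ⊢
  have hrev : ‖Matrix.toEuclideanLin M (x2 ystar) - Matrix.toEuclideanLin M (x2 y)‖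
      = ‖Matrix.toEuclideanLin M (x2 y) - Matrix.toEuclideanLin M (x2 ystar)‖ := norm_sub_rev _ _
  rw [hrev] at h1
  have hcs : ⟪ystar - y, x1 y - x2 y⟫_ℝ ≤ ‖ystar - y‖ * ‖x1 y - x2 y‖ := real_inner_le_norm _ _
  have hnrev : ‖ystar - y‖ = ‖y - ystar‖ := norm_sub_rev _ _
  have hinsub : ⟪ystar - y, x1 y - x2 y⟫_ℝ = ⟪ystar, x1 y - x2 y⟫_ℝ - ⟪y, x1 y - x2 y⟫_ℝ :=
    inner_sub_left _ _ _
  rw [hnrev] at hcs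
  linarith
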